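/- Let P_0, P_1, …, P_M be probability measures with P_j ≪ P_0 for all j, let X be a random variable with finite variance under P_0, and let Δ be the vector with j-th entry E_{P_j}[X] - E_{P_0}[X]. Then Δᵀ χ²(P_0,…,P_M)⁺ Δ ≤ Var_{P_0}(X), where χ²(P_0,…,P_M) is the M×M matrix with (j,k)-entry ∫ (dP_j/dP_0) dP_k - 1 and A⁺ denotes the Moore–Penrose pseudoinverse. -/

import Mathlib

open MeasureTheory ProbabilityTheory Matrix

/-- The `M × M` chi-square divergence matrix of `P 0, P 1, …, P M`, with `(j,k)` entry
`∫ (dP_j/dP_0) dP_k - 1`. -/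
noncomputable def chiSqMatrix {Ω : Type*} [MeasurableSpace Ω] {M : ℕ}
    (P : Fin (M + 1) → Measure Ω) : Matrix (Fin M) (Fin M) ℝ :=
  Matrix.of fun j k => (∫ ω, ((P j.succ).rnDeriv (P 0) ω).toReal ∂(P k.succ)) - 1

/-- Multiple-measure chi-square lower bound: for probability measures `P_0, …, P_M` with
`P_j ≪ P_0`, and `Δ_j = E_{P_j}[X] - E_{P_0}[X]`, any Moore–Penrose pseudoinverse `Aplus`
of the chi-square divergence matrix satisfies `Δᵀ Aplus Δ ≤ Var_{P_0}(X)`. -/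
lemma mp_transpose_eq {n : ℕ} (A B : Matrix (Fin n) (Fin n) ℝ) (hA : Aᵀ = A)
    (h1 : A * B * A = A) (h2 : B * A * B = B)
    (h3 : (A * B)ᵀ = A * B) (h4 : (B * A)ᵀ = B * A) : Bᵀ = B := by
  have h3' : Bᵀ * A = A * B := by
    calc Bᵀ * A = Bᵀ * Aᵀ := by rw [hA]
      _ = (A * B)ᵀ := (Matrix.transpose_mul A B).symm
      _ = A * B := h3
  have h4' : A * Bᵀ = B * A := by
    calc A * Bᵀ = Aᵀ * Bᵀ := by rw [hA]
      _ = (B * A)ᵀ := (Matrix.transpose_mul B A).symm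
      _ = B * A := h4
  have hc1 : A * Bᵀ * A = A := by
    have := congrArg Matrix.transpose h1
    simpa [Matrix.transpose_mul, hA, Matrix.mul_assoc] using this
  have hc2 : Bᵀ * A * Bᵀ = Bᵀ := by
    have := congrArg Matrix.transpose h2
    simpa [Matrix.transpose_mul, hA, Matrix.mul_assoc] using this
  have step1 : A * B = B * A := by
    calc A * B = (A * Bᵀ * A) * B := by rw [hc1]
      _ = (A * Bᵀ) * (A * B) := by rw [Matrix.mul_assoc (A * Bᵀ) A B]
      _ = (B * A) * (Bᵀ * A) := by rw [h4', h3']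
      _ = B * (A * Bᵀ * A) := by simp [Matrix.mul_assoc]
      _ = B * A := by rw [hc1]
  have step2 : A * Bᵀ = A * B := h4'.trans step1.symm
  have step3 : Bᵀ * A = B * A := h3'.trans step1
  calc Bᵀ = Bᵀ * A * Bᵀ := hc2.symm
    _ = B * A * Bᵀ := by rw [step3]
    _ = B * (A * Bᵀ) := by rw [Matrix.mul_assoc]
    _ = B * (A * B) := by rw [step2]
    _ = B * A * B := by rw [Matrix.mul_assoc]
    _ = B := h2

theorem stmt4 {Ω : Type*} [MeasurableSpace Ω] {M : ℕ}
    (P : Fin (M + 1) → Measure Ω) [∀ j, IsProbabilityMeasure (P j)]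
    (hAC : ∀ j : Fin M, P j.succ ≪ P 0)
    (hInt : ∀ j k : Fin M,
      Integrable (fun ω => ((P j.succ).rnDeriv (P 0) ω).toReal) (P k.succ))
    (X : Ω → ℝ) (hX0 : MemLp X 2 (P 0)) (hXint : ∀ j, Integrable X (P j))
    (Aplus : Matrix (Fin M) (Fin M) ℝ)
    (h1 : chiSqMatrix P * Aplus * chiSqMatrix P = chiSqMatrix P)
    (h2 : Aplus * chiSqMatrix P * Aplus = Aplus)
    (h3 : (chiSqMatrix P * Aplus)ᵀ = chiSqMatrix P * Aplus)
    (h4 : (Aplus * chiSqMatrix P)ᵀ = Aplus * chiSqMatrix P) :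
    (fun j : Fin M => (∫ ω, X ω ∂(P j.succ)) - ∫ ω, X ω ∂(P 0)) ⬝ᵥ
        (Aplus *ᵥ fun j : Fin M => (∫ ω, X ω ∂(P j.succ)) - ∫ ω, X ω ∂(P 0)) ≤
      variance X (P 0) := by
  set μ := P 0 with hμ
  set L : Fin M → Ω → ℝ := fun j ω => ((P j.succ).rnDeriv μ ω).toReal with hL
  -- basic integrability and integral facts
  have hIntLL : ∀ j k : Fin M, Integrable (fun ω => L k ω * L j ω) μ := by
    intro j k
    have := (MeasureTheory.integrable_rnDeriv_smul_iff (f := L j) (hAC k)).mpr (hInt j k)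
    simpa [smul_eq_mul] using this
  have hLL : ∀ j k : Fin M,
      (∫ ω, L j ω ∂(P k.succ)) = ∫ ω, L k ω * L j ω ∂μ := by
    intro j k
    have := MeasureTheory.integral_rnDeriv_smul (f := L j) (hAC k)
    simpa [smul_eq_mul] using this.symm
  have hIntL : ∀ j : Fin M, Integrable (L j) μ :=
    fun j => Measure.integrable_toReal_rnDeriv
  have hEL : ∀ j : Fin M, (∫ ω, L j ω ∂μ) = 1 := by
    intro j
    rw [hL]
    rw [Measure.integral_toReal_rnDeriv (hAC j)]
    simp
  have hIntXL : ∀ j : Fin M, Integrable (fun ω => L j ω * X ω) μ := by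
    intro j
    have := (MeasureTheory.integrable_rnDeriv_smul_iff (f := X) (hAC j)).mpr (hXint j.succ)
    simpa [smul_eq_mul] using this
  have hXL : ∀ j : Fin M, (∫ ω, L j ω * X ω ∂μ) = ∫ ω, X ω ∂(P j.succ) := by
    intro j
    have := MeasureTheory.integral_rnDeriv_smul (f := X) (hAC j)
    simpa [smul_eq_mul] using this
  have hXint0 : Integrable X μ := hXint 0
  set m : ℝ := ∫ ω, X ω ∂μ with hm
  set Xt : Ω → ℝ := fun ω => X ω - m with hXt
  set g : Fin M → Ω → ℝ := fun j ω => L j ω - 1 with hg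
  set Δ : Fin M → ℝ := fun j => (∫ ω, X ω ∂(P j.succ)) - m with hΔ
  set c : Fin M → ℝ := Aplus *ᵥ Δ with hc
  set Y : Ω → ℝ := fun ω => ∑ j, c j * g j ω with hY
  have hXt2 : MemLp Xt 2 μ := hX0.sub (memLp_const m)
  have hXtsq : Integrable (fun ω => Xt ω ^ 2) μ := hXt2.integrable_sq
  -- integrability of g_j * g_k and its integral
  have hgg_int : ∀ j k : Fin M, Integrable (fun ω => g j ω * g k ω) μ := by
    intro j k
    have heq : (fun ω => g j ω * g k ω)
        = fun ω => L k ω * L j ω - L j ω - L k ω + 1 := by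
      funext ω; simp only [hg]; ring
    rw [heq]
    exact (((hIntLL j k).sub (hIntL j)).sub (hIntL k)).add (integrable_const 1)
  have hgg : ∀ j k : Fin M, (∫ ω, g j ω * g k ω ∂μ) = chiSqMatrix P j k := by
    intro j k
    have heq : (fun ω => g j ω * g k ω)
        = fun ω => L k ω * L j ω - L j ω - L k ω + 1 := by
      funext ω; simp only [hg]; ring
    have i1 : Integrable (fun ω => L k ω * L j ω - L j ω) μ := (hIntLL j k).sub (hIntL j)
    have i2 : Integrable (fun ω => L k ω * L j ω - L j ω - L k ω) μ := i1.sub (hIntL k)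
    rw [heq, integral_add i2 (integrable_const 1), integral_sub i1 (hIntL k),
      integral_sub (hIntLL j k) (hIntL j), hEL j, hEL k]
    simp [chiSqMatrix, hLL j k]
    exact (hLL j k).symm
  -- integrability of Xt * g_j and its integral
  have hXg_int : ∀ j : Fin M, Integrable (fun ω => Xt ω * g j ω) μ := by
    intro j
    have heq : (fun ω => Xt ω * g j ω)
        = fun ω => (L j ω * X ω - X ω) - (m * L j ω - m) := by
      funext ω; simp only [hXt, hg]; ring
    rw [heq]
    exact ((hIntXL j).sub hXint0).sub (((hIntL j).const_mul m).sub (integrable_const m))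
  have hXg : ∀ j : Fin M, (∫ ω, Xt ω * g j ω ∂μ) = Δ j := by
    intro j
    have heq : (fun ω => Xt ω * g j ω)
        = fun ω => (L j ω * X ω - X ω) - (m * L j ω - m) := by
      funext ω; simp only [hXt, hg]; ring
    have i1 : Integrable (fun ω => L j ω * X ω - X ω) μ := (hIntXL j).sub hXint0
    have i2 : Integrable (fun ω => m * L j ω) μ := (hIntL j).const_mul m
    have i3 : Integrable (fun ω => m * L j ω - m) μ := i2.sub (integrable_const m)
    rw [heq, integral_sub i1 i3, integral_sub (hIntXL j) hXint0,
      integral_sub i2 (integrable_const m), integral_const_mul, hEL j, hXL j]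
    simp [hΔ, hm]
  -- symmetry of the chi-square matrix
  have hSsym : (chiSqMatrix P)ᵀ = chiSqMatrix P := by
    ext j k
    simp only [Matrix.transpose_apply, chiSqMatrix, Matrix.of_apply]
    rw [hLL k j, hLL j k]
    have : (fun ω => L j ω * L k ω) = fun ω => L k ω * L j ω := by
      funext ω; ring
    rw [this]
  have hBsym : Aplusᵀ = Aplus := mp_transpose_eq _ _ hSsym h1 h2 h3 h4
  -- pointwise expansion of (Xt - Y)^2
  have hpt : (fun ω => (Xt ω - Y ω) ^ 2)
      = fun ω => Xt ω ^ 2 - 2 * ∑ j, c j * (Xt ω * g j ω)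
          + ∑ j, ∑ k, (c j * c k) * (g j ω * g k ω) := by
    funext ω
    have e1 : Xt ω * Y ω = ∑ j, c j * (Xt ω * g j ω) := by
      simp only [hY, Finset.mul_sum]
      exact Finset.sum_congr rfl fun j _ => by ring
    have e2 : Y ω * Y ω = ∑ j, ∑ k, (c j * c k) * (g j ω * g k ω) := by
      simp only [hY, Finset.sum_mul_sum]
      exact Finset.sum_congr rfl fun j _ => Finset.sum_congr rfl fun k _ => by ring
    calc (Xt ω - Y ω) ^ 2 = Xt ω ^ 2 - 2 * (Xt ω * Y ω) + Y ω * Y ω := by ring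
      _ = _ := by rw [e1, e2]
  -- integrability of the pieces
  have hsum1_int : Integrable (fun ω => 2 * ∑ j, c j * (Xt ω * g j ω)) μ :=
    (integrable_finset_sum _ fun j _ => (hXg_int j).const_mul (c j)).const_mul 2
  have hsub_int : Integrable (fun ω => Xt ω ^ 2 - 2 * ∑ j, c j * (Xt ω * g j ω)) μ :=
    hXtsq.sub hsum1_int
  have hsum2_int : Integrable (fun ω => ∑ j, ∑ k, (c j * c k) * (g j ω * g k ω)) μ :=
    integrable_finset_sum _ fun j _ =>
      integrable_finset_sum _ fun k _ => (hgg_int j k).const_mul _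
  -- the three integrals
  have hI1 : (∫ ω, ∑ j, c j * (Xt ω * g j ω) ∂μ) = c ⬝ᵥ Δ := by
    rw [integral_finset_sum _ fun j _ => (hXg_int j).const_mul (c j), dotProduct]
    exact Finset.sum_congr rfl fun j _ => by rw [integral_const_mul, hXg j]
  have hI2 : (∫ ω, ∑ j, ∑ k, (c j * c k) * (g j ω * g k ω) ∂μ)
      = c ⬝ᵥ (chiSqMatrix P *ᵥ c) := by
    rw [integral_finset_sum _ fun j _ =>
      integrable_finset_sum _ fun k _ => (hgg_int j k).const_mul _]
    have hrow : ∀ j : Fin M, (∫ ω, ∑ k, (c j * c k) * (g j ω * g k ω) ∂μ)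
        = ∑ k, (c j * c k) * chiSqMatrix P j k := by
      intro j
      rw [integral_finset_sum _ fun k _ => (hgg_int j k).const_mul _]
      exact Finset.sum_congr rfl fun k _ => by rw [integral_const_mul, hgg j k]
    rw [Finset.sum_congr rfl fun j _ => hrow j]
    simp only [dotProduct, Matrix.mulVec, Finset.mul_sum]
    exact Finset.sum_congr rfl fun j _ => Finset.sum_congr rfl fun k _ => by ring
  have hV : (∫ ω, Xt ω ^ 2 ∂μ) = variance X μ := by
    rw [variance_eq_integral hX0.aestronglyMeasurable.aemeasurable]
  have key : (0 : ℝ) ≤ ∫ ω, (Xt ω - Y ω) ^ 2 ∂μ := integral_nonneg fun ω => sq_nonneg _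
  have hIexp : (∫ ω, (Xt ω - Y ω) ^ 2 ∂μ)
      = variance X μ - 2 * (c ⬝ᵥ Δ) + c ⬝ᵥ (chiSqMatrix P *ᵥ c) := by
    rw [hpt, integral_add hsub_int hsum2_int, integral_sub hXtsq hsum1_int,
      integral_const_mul, hI1, hI2, hV]
  -- matrix algebra: c ⬝ᵥ (Σ *ᵥ c) = Δ ⬝ᵥ c
  have hcv : c = Δ ᵥ* Aplus := by
    rw [hc]
    conv_lhs => rw [← hBsym]
    rw [Matrix.mulVec_transpose]
  have hQ2 : c ⬝ᵥ (chiSqMatrix P *ᵥ c) = Δ ⬝ᵥ c := by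
    calc c ⬝ᵥ (chiSqMatrix P *ᵥ c)
        = (Δ ᵥ* Aplus) ⬝ᵥ ((chiSqMatrix P * Aplus) *ᵥ Δ) := by
          rw [← hcv, hc, Matrix.mulVec_mulVec]
      _ = ((Δ ᵥ* Aplus) ᵥ* (chiSqMatrix P * Aplus)) ⬝ᵥ Δ := by
          rw [Matrix.dotProduct_mulVec]
      _ = (Δ ᵥ* (Aplus * (chiSqMatrix P * Aplus))) ⬝ᵥ Δ := by
          rw [Matrix.vecMul_vecMul]
      _ = (Δ ᵥ* Aplus) ⬝ᵥ Δ := by rw [← Matrix.mul_assoc, h2]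
      _ = c ⬝ᵥ Δ := by rw [← hcv]
      _ = Δ ⬝ᵥ c := dotProduct_comm _ _
  have hcomm : c ⬝ᵥ Δ = Δ ⬝ᵥ c := dotProduct_comm _ _
  have : (0 : ℝ) ≤ variance X μ - Δ ⬝ᵥ c := by
    have := hIexp ▸ key
    linarith [this, hQ2, hcomm]
  linarith [this]
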